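/- Let α be a finite set, f and q pmfs on α, M ≥ 1 a natural number, and δ a real number with 0 ≤ δ ≤ H(q‖f). If X₁,…,X_M are i.i.d. with common pmf f and p̂ denotes their empirical distribution, then Pr(H(p̂‖q) ≤ δ) ≤ (M+1)^{|α|} · exp(−2·M·(H(q‖f) − δ)²). -/

import Mathlib

open Finset

/-- `p` is a probability mass function on the finite type `α`. -/
def IsPmf {α : Type*} [Fintype α] (p : α → ℝ) : Prop :=
  (∀ a, 0 ≤ p a) ∧ ∑ a, p a = 1

/-- Squared Hellinger divergence between pmfs on a finite type. -/
noncomputable def hellingerSq {α : Type*} [Fintype α] (p q : α → ℝ) : ℝ :=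
  (1 / 2) * ∑ a, (Real.sqrt (p a) - Real.sqrt (q a)) ^ 2

/-- Hellinger distance between pmfs on a finite type. -/
noncomputable def hellinger {α : Type*} [Fintype α] (p q : α → ℝ) : ℝ :=
  Real.sqrt (hellingerSq p q)

/-- Empirical distribution of the sample `x = (x₁, …, x_M)`. -/
noncomputable def empDist {α : Type*} [Fintype α] [DecidableEq α] {M : ℕ}
    (x : Fin M → α) (a : α) : ℝ :=
  ((Finset.univ.filter fun i => x i = a).card : ℝ) / M

/-! ### Auxiliary lemmas -/

lemma termF (M : ℕ) (hM : 1 ≤ M) (n : ℕ) (y : ℝ) (hy : 0 ≤ y) :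
    y ^ n ≤ Real.exp (2 * Real.sqrt (n * M * y) - 2 * n) * ((n : ℝ) / M) ^ n := by
  have hM0 : (0:ℝ) < M := by exact_mod_cast hM
  rcases Nat.eq_zero_or_pos n with hn | hn
  · subst hn; simp
  rcases eq_or_lt_of_le hy with hy0 | hy0
  · rw [← hy0]
    rw [zero_pow (by omega)]
    positivity
  have hn0 : (0:ℝ) < n := by exact_mod_cast hn
  set t := Real.sqrt (M * y / n) with ht
  have ht0 : 0 < t := Real.sqrt_pos.mpr (by positivity)
  have htsq : t ^ 2 = M * y / n := Real.sq_sqrt (by positivity)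
  have hsqrt : Real.sqrt ((n:ℝ) * M * y) = n * t := by
    rw [ht, ← Real.sqrt_sq hn0.le, ← Real.sqrt_mul (by positivity)]
    congr 1; rw [Real.sqrt_sq hn0.le]; field_simp
  have hlog : Real.log (M * y / n) ≤ 2 * (t - 1) := by
    have := Real.log_le_sub_one_of_pos ht0
    have h2 : Real.log (M * y / n) = 2 * Real.log t := by
      rw [← htsq, Real.log_pow]; push_cast; ring
    rw [h2]; linarith
  have hkey : (n:ℝ) * Real.log y ≤ 2 * Real.sqrt ((n:ℝ) * M * y) - 2 * n + n * Real.log ((n:ℝ)/M) := by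
    have hsplit : Real.log (M * y / n) = Real.log y - Real.log ((n:ℝ)/M) := by
      rw [Real.log_div (by positivity) (by positivity), Real.log_mul (by positivity) (by positivity),
        Real.log_div (by positivity) (by positivity)]
      ring
    rw [hsqrt]
    nlinarith [hlog, hsplit, hn0]
  calc y ^ n = Real.exp ((n:ℝ) * Real.log y) := by
        rw [mul_comm, Real.exp_mul, Real.exp_log hy0]; norm_cast
    _ ≤ Real.exp (2 * Real.sqrt ((n:ℝ) * M * y) - 2 * n + n * Real.log ((n:ℝ)/M)) :=
        Real.exp_le_exp.mpr hkey
    _ = Real.exp (2 * Real.sqrt ((n:ℝ) * M * y) - 2 * n) * ((n:ℝ)/M)^n := by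
        rw [Real.exp_add]
        congr 1
        rw [mul_comm, Real.exp_mul, Real.exp_log (by positivity)]; norm_cast

lemma hellingerSq_eq {α : Type*} [Fintype α] (p f : α → ℝ) (hp : IsPmf p) (hf : IsPmf f) :
    hellingerSq p f = 1 - ∑ a, Real.sqrt (p a * f a) := by
  unfold hellingerSq
  have : ∀ a : α, (Real.sqrt (p a) - Real.sqrt (f a))^2
      = p a + f a - 2 * Real.sqrt (p a * f a) := by
    intro a
    rw [sub_sq, Real.sq_sqrt (hp.1 a), Real.sq_sqrt (hf.1 a), Real.sqrt_mul (hp.1 a)]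
    ring
  rw [Finset.sum_congr rfl fun a _ => this a]
  rw [Finset.sum_sub_distrib, Finset.sum_add_distrib, hp.2, hf.2, ← Finset.mul_sum]
  ring

lemma prodE {α : Type*} [Fintype α] (f : α → ℝ) (hf : IsPmf f) (M : ℕ) (hM : 1 ≤ M)
    (c : α → ℕ) (hc : ∑ a, c a = M) :
    ∏ a, f a ^ c a ≤
      Real.exp (-2 * M * hellingerSq (fun a => (c a : ℝ) / M) f) *
        ∏ a, ((c a : ℝ) / M) ^ c a := by
  have hM0 : (0:ℝ) < M := by exact_mod_cast hM
  set p : α → ℝ := fun a => (c a : ℝ) / M with hp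
  have hppmf : IsPmf p := by
    constructor
    · intro a; positivity
    · rw [hp, ← Finset.sum_div]
      rw [show ∑ a, ((c a : ℝ)) = (M:ℝ) by exact_mod_cast congrArg Nat.cast hc]
      field_simp
  have hH : -2 * (M:ℝ) * hellingerSq p f
      = ∑ a, (2 * Real.sqrt ((c a : ℝ) * M * f a) - 2 * (c a : ℝ)) := by
    rw [hellingerSq_eq p f hppmf hf]
    have h1 : ∀ a : α, 2 * Real.sqrt ((c a : ℝ) * M * f a)
        = 2 * M * Real.sqrt (p a * f a) := by
      intro a
      rw [hp]
      rw [show ((c a : ℝ)) * M * f a = (M:ℝ)^2 * ((c a / M) * f a) by field_simp]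
      rw [Real.sqrt_mul (by positivity), Real.sqrt_sq hM0.le]
      ring
    rw [Finset.sum_sub_distrib, Finset.sum_congr rfl fun a _ => h1 a, ← Finset.mul_sum,
      ← Finset.mul_sum]
    rw [show ∑ a, ((c a : ℝ)) = (M:ℝ) by exact_mod_cast congrArg Nat.cast hc]
    ring
  rw [hH, Real.exp_sum, ← Finset.prod_mul_distrib]
  exact Finset.prod_le_prod (fun a _ => pow_nonneg (hf.1 a) _)
    (fun a _ => termF M hM (c a) (f a) (hf.1 a))

lemma hellingerSq_nonneg {α : Type*} [Fintype α] (p q : α → ℝ) : 0 ≤ hellingerSq p q := by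
  unfold hellingerSq; positivity

lemma sq_hellinger {α : Type*} [Fintype α] (p q : α → ℝ) :
    hellinger p q ^ 2 = hellingerSq p q :=
  Real.sq_sqrt (hellingerSq_nonneg p q)

lemma hellinger_eq_dist {α : Type*} [Fintype α] (p q : α → ℝ) :
    hellinger p q = Real.sqrt (1/2) *
      @dist (EuclideanSpace ℝ α) _ (WithLp.toLp 2 fun a => Real.sqrt (p a)) (WithLp.toLp 2 fun a => Real.sqrt (q a)) := by
  rw [hellinger, hellingerSq, Real.sqrt_mul (by norm_num), EuclideanSpace.dist_eq]
  simp [Real.dist_eq, sq_abs]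

lemma hellinger_comm {α : Type*} [Fintype α] (p q : α → ℝ) :
    hellinger p q = hellinger q p := by
  rw [hellinger_eq_dist, hellinger_eq_dist, dist_comm]

lemma hellinger_triangle {α : Type*} [Fintype α] (p q r : α → ℝ) :
    hellinger p r ≤ hellinger p q + hellinger q r := by
  rw [hellinger_eq_dist, hellinger_eq_dist, hellinger_eq_dist, ← mul_add]
  have := @dist_triangle (EuclideanSpace ℝ α) _ (WithLp.toLp 2 fun a => Real.sqrt (p a))
    (WithLp.toLp 2 fun a => Real.sqrt (q a)) (WithLp.toLp 2 fun a => Real.sqrt (r a))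
  have h : (0:ℝ) ≤ Real.sqrt (1/2) := Real.sqrt_nonneg _
  nlinarith

lemma hellinger_nonneg {α : Type*} [Fintype α] (p q : α → ℝ) : 0 ≤ hellinger p q :=
  Real.sqrt_nonneg _

lemma prod_count {α : Type*} [Fintype α] [DecidableEq α] {M : ℕ} (x : Fin M → α) (g : α → ℝ) :
    ∏ i, g (x i) = ∏ a, g a ^ (Finset.univ.filter fun i => x i = a).card := by
  rw [← Finset.prod_fiberwise_of_maps_to (g := x) (t := Finset.univ) (fun i _ => mem_univ _)]
  refine Finset.prod_congr rfl fun a _ => ?_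
  rw [Finset.prod_congr rfl (fun i hi => by rw [(Finset.mem_filter.mp hi).2] : ∀ i ∈ Finset.univ.filter fun i => x i = a, g (x i) = g a),
    Finset.prod_const]

lemma sum_count {α : Type*} [Fintype α] [DecidableEq α] {M : ℕ} (x : Fin M → α) :
    ∑ a, (Finset.univ.filter fun i => x i = a).card = M := by
  rw [← Finset.card_eq_sum_card_fiberwise (fun i _ => mem_univ (x i))]
  simp

lemma empDist_nonneg {α : Type*} [Fintype α] [DecidableEq α] {M : ℕ} (x : Fin M → α) (a : α) :
    0 ≤ empDist x a := by unfold empDist; positivity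

lemma sum_empDist {α : Type*} [Fintype α] [DecidableEq α] {M : ℕ} (hM : 1 ≤ M) (x : Fin M → α) :
    ∑ a, empDist x a = 1 := by
  have hM0 : (0:ℝ) < M := by exact_mod_cast hM
  unfold empDist
  rw [← Finset.sum_div]
  rw [show ∑ a, (((Finset.univ.filter fun i => x i = a).card : ℝ)) = (M:ℝ) by
    exact_mod_cast congrArg Nat.cast (sum_count x)]
  field_simp

lemma sumB {α : Type*} [Fintype α] [DecidableEq α] {M : ℕ} (hM : 1 ≤ M) :
    ∑ x : Fin M → α, ∏ i, empDist x (x i) ≤ ((M:ℝ) + 1) ^ (Fintype.card α) := by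
  classical
  set T : (Fin M → α) → (α → Fin (M+1)) := fun x a =>
    ⟨(Finset.univ.filter fun i => x i = a).card,
      Nat.lt_succ_of_le (le_trans (Finset.card_filter_le _ _) (by simp))⟩ with hT
  rw [← Finset.sum_fiberwise_of_maps_to (g := T) (t := Finset.univ) (fun x _ => mem_univ _)]
  have hfiber : ∀ c : α → Fin (M+1),
      ∑ x ∈ Finset.univ.filter fun x => T x = c, ∏ i, empDist x (x i) ≤ 1 := by
    intro c
    rcases Finset.eq_empty_or_nonempty (Finset.univ.filter fun x => T x = c) with he | ⟨x₀, hx₀⟩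
    · rw [he]; simp
    have hx₀c : T x₀ = c := (Finset.mem_filter.mp hx₀).2
    have hsame : ∀ x ∈ Finset.univ.filter fun x => T x = c, empDist x = empDist x₀ := by
      intro x hx
      have hxc : T x = c := (Finset.mem_filter.mp hx).2
      funext a
      unfold empDist
      have : ((Finset.univ.filter fun i => x i = a).card : ℕ) =
          (Finset.univ.filter fun i => x₀ i = a).card := by
        have := congrFun (hxc.trans hx₀c.symm) a
        exact congrArg Fin.val this
      rw [this]
    calc ∑ x ∈ Finset.univ.filter fun x => T x = c, ∏ i, empDist x (x i)
        = ∑ x ∈ Finset.univ.filter fun x => T x = c, ∏ i, empDist x₀ (x i) := by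
          refine Finset.sum_congr rfl fun x hx => ?_
          rw [hsame x hx]
      _ ≤ ∑ x : Fin M → α, ∏ i, empDist x₀ (x i) := by
          refine Finset.sum_le_sum_of_subset_of_nonneg (Finset.filter_subset _ _) ?_
          intro x _ _
          exact Finset.prod_nonneg fun i _ => empDist_nonneg x₀ (x i)
      _ = ∏ i : Fin M, ∑ a, empDist x₀ a := by
          rw [Finset.prod_univ_sum]
          simp
      _ = 1 := by rw [sum_empDist hM x₀]; simp
  calc ∑ c : α → Fin (M+1), ∑ x ∈ Finset.univ.filter fun x => T x = c, ∏ i, empDist x (x i)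
      ≤ ∑ _c : α → Fin (M+1), (1:ℝ) := Finset.sum_le_sum fun c _ => hfiber c
    _ = ((M:ℝ) + 1) ^ (Fintype.card α) := by
        rw [Finset.sum_const, Finset.card_univ, Fintype.card_fun]
        simp

/-- Pointwise bound: for a sample `x`, the probability weight is at most
`exp(-2M·H²(p̂,f))` times the weight under the empirical distribution. -/
lemma pointwiseA {α : Type*} [Fintype α] [DecidableEq α] (f : α → ℝ) (hf : IsPmf f)
    {M : ℕ} (hM : 1 ≤ M) (x : Fin M → α) :
    ∏ i, f (x i) ≤ Real.exp (-2 * M * hellingerSq (empDist x) f) * ∏ i, empDist x (x i) := by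
  rw [prod_count x f, prod_count x (empDist x)]
  have h := prodE f hf M hM (fun a => (Finset.univ.filter fun i => x i = a).card) (sum_count x)
  have hemp : empDist x = fun a => (((Finset.univ.filter fun i => x i = a).card : ℕ) : ℝ) / M := by
    funext a; rfl
  rw [hemp]
  exact h

/-- If `X₁, …, X_M` are i.i.d. with pmf `f`, `p̂` is their empirical distribution, and
`0 ≤ δ ≤ H(q‖f)`, then `Pr(H(p̂‖q) ≤ δ) ≤ (M+1)^{|α|} · exp(−2M(H(q‖f) − δ)²)`. -/
theorem prob_hellinger_emp_le {α : Type*} [Fintype α] [DecidableEq α]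
    (f q : α → ℝ) (hf : IsPmf f) (hq : IsPmf q) (M : ℕ) (hM : 1 ≤ M)
    (δ : ℝ) (hδ0 : 0 ≤ δ) (hδ : δ ≤ hellinger q f) :
    (∑ x : Fin M → α,
        Set.indicator {x : Fin M → α | hellinger (empDist x) q ≤ δ}
          (fun x => ∏ i, f (x i)) x) ≤
      ((M : ℝ) + 1) ^ (Fintype.card α) *
        Real.exp (-2 * M * (hellinger q f - δ) ^ 2) := by
  classical
  set E := Real.exp (-2 * M * (hellinger q f - δ) ^ 2) with hE
  have hE0 : 0 < E := Real.exp_pos _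
  have hpt : ∀ x : Fin M → α,
      Set.indicator {x : Fin M → α | hellinger (empDist x) q ≤ δ}
        (fun x => ∏ i, f (x i)) x ≤ E * ∏ i, empDist x (x i) := by
    intro x
    by_cases hx : x ∈ {x : Fin M → α | hellinger (empDist x) q ≤ δ}
    · rw [Set.indicator_of_mem hx]
      have hxδ : hellinger (empDist x) q ≤ δ := hx
      -- triangle inequality: H(q,f) ≤ H(q,p̂) + H(p̂,f)
      have htri : hellinger q f ≤ hellinger (empDist x) q + hellinger (empDist x) f := by
        have := hellinger_triangle q (empDist x) f
        rw [hellinger_comm q (empDist x)] at this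
        linarith
      have hge : hellinger q f - δ ≤ hellinger (empDist x) f := by linarith
      have hge0 : 0 ≤ hellinger q f - δ := by linarith
      have hsq : (hellinger q f - δ) ^ 2 ≤ hellingerSq (empDist x) f := by
        rw [← sq_hellinger (empDist x) f]
        exact pow_le_pow_left₀ hge0 hge 2
      have hexp : Real.exp (-2 * M * hellingerSq (empDist x) f) ≤ E := by
        rw [hE]
        apply Real.exp_le_exp.mpr
        have hM0 : (0:ℝ) ≤ M := by positivity
        nlinarith
      calc ∏ i, f (x i)
          ≤ Real.exp (-2 * M * hellingerSq (empDist x) f) * ∏ i, empDist x (x i) :=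
            pointwiseA f hf hM x
        _ ≤ E * ∏ i, empDist x (x i) := by
            apply mul_le_mul_of_nonneg_right hexp
            exact Finset.prod_nonneg fun i _ => empDist_nonneg x (x i)
    · rw [Set.indicator_of_notMem hx]
      have : 0 ≤ ∏ i, empDist x (x i) := Finset.prod_nonneg fun i _ => empDist_nonneg x (x i)
      positivity
  calc (∑ x : Fin M → α,
        Set.indicator {x : Fin M → α | hellinger (empDist x) q ≤ δ}
          (fun x => ∏ i, f (x i)) x)
      ≤ ∑ x : Fin M → α, E * ∏ i, empDist x (x i) := Finset.sum_le_sum fun x _ => hpt x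
    _ = E * ∑ x : Fin M → α, ∏ i, empDist x (x i) := by rw [Finset.mul_sum]
    _ ≤ E * (((M:ℝ) + 1) ^ (Fintype.card α)) :=
        mul_le_mul_of_nonneg_left (sumB hM) hE0.le
    _ = ((M : ℝ) + 1) ^ (Fintype.card α) * E := mul_comm _ _
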